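/- Müntz's theorem: let 0 ≤ λ₀ < λ₁ < λ₂ < ⋯ be an increasing sequence of real numbers tending to ∞. The linear span of the power functions x^{λ₀}, x^{λ₁}, x^{λ₂}, … is dense in C[0,1] with the uniform norm if and only if λ₀ = 0 and Σ_{k=1}^{∞} 1/λ_k = ∞. -/

import Mathlib

open MeasureTheory Set Finset intervalIntegral Polynomial Filter Topology

namespace MuntzAux

lemma rpow_mul_rpow {x : ℝ} (hx : 0 ≤ x) {a b : ℝ} (ha : 0 ≤ a) (hb : 0 ≤ b) :
    x ^ a * x ^ b = x ^ (a + b) := by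
  rcases hx.eq_or_lt with h | h
  · subst h
    rcases ha.eq_or_lt with h1 | h1
    · simp [← h1]
    · rw [Real.zero_rpow h1.ne', zero_mul, Real.zero_rpow (by positivity)]
  · exact (Real.rpow_add h a b).symm

lemma contOn_rpow {c : ℝ} (hc : 0 ≤ c) : ContinuousOn (fun x : ℝ => x ^ c) (Set.Icc 0 1) :=
  fun x _ => (Real.continuousAt_rpow_const x c (Or.inr hc)).continuousWithinAt

lemma integrable01 {f : ℝ → ℝ} (hf : ContinuousOn f (Set.Icc 0 1)) :
    IntervalIntegrable f volume 0 1 := by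
  apply ContinuousOn.intervalIntegrable
  rwa [Set.uIcc_of_le (zero_le_one' ℝ)]

lemma integral_rpow01 {c : ℝ} (hc : 0 ≤ c) :
    ∫ x in (0:ℝ)..1, x ^ c = 1 / (c + 1) := by
  rw [integral_rpow (Or.inl (by linarith))]
  rw [Real.one_rpow, Real.zero_rpow (by positivity)]
  ring

/-- Cauchy–Schwarz for integrals on [0,1] of continuous functions. -/

lemma cauchy_schwarz {f g : ℝ → ℝ} (hf : ContinuousOn f (Set.Icc 0 1))
    (hg : ContinuousOn g (Set.Icc 0 1)) :
    (∫ x in (0:ℝ)..1, f x * g x) ^ 2 ≤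
      (∫ x in (0:ℝ)..1, f x ^ 2) * ∫ x in (0:ℝ)..1, g x ^ 2 := by
  set A := ∫ x in (0:ℝ)..1, f x ^ 2
  set B := ∫ x in (0:ℝ)..1, f x * g x
  set C := ∫ x in (0:ℝ)..1, g x ^ 2
  have hA : IntervalIntegrable (fun x => f x ^ 2) volume 0 1 := integrable01 (hf.pow 2)
  have hB : IntervalIntegrable (fun x => f x * g x) volume 0 1 := integrable01 (hf.mul hg)
  have hC : IntervalIntegrable (fun x => g x ^ 2) volume 0 1 := integrable01 (hg.pow 2)
  have key : ∀ t : ℝ, 0 ≤ A * (t * t) + (2 * B) * t + C := by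
    intro t
    have h1 : ∀ x, (t * f x + g x) ^ 2
        = (t * t) * f x ^ 2 + (2 * t) * (f x * g x) + g x ^ 2 := by intro x; ring
    have h2 : (0:ℝ) ≤ ∫ x in (0:ℝ)..1, (t * f x + g x) ^ 2 := by
      apply intervalIntegral.integral_nonneg (zero_le_one' ℝ)
      intro x _; positivity
    calc (0:ℝ) ≤ ∫ x in (0:ℝ)..1, (t * f x + g x) ^ 2 := h2
      _ = ∫ x in (0:ℝ)..1, ((t * t) * f x ^ 2 + (2 * t) * (f x * g x) + g x ^ 2) := by
          simp only [h1]
      _ = A * (t * t) + (2 * B) * t + C := by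
          rw [intervalIntegral.integral_add ((hA.const_mul _).add (hB.const_mul _)) hC,
            intervalIntegral.integral_add (hA.const_mul _) (hB.const_mul _),
            intervalIntegral.integral_const_mul, intervalIntegral.integral_const_mul]
          ring
  have := discrim_le_zero key
  rw [discrim] at this
  nlinarith [this]

noncomputable def powCM (c : ℝ) (hc : 0 ≤ c) : C(Set.Icc (0:ℝ) 1, ℝ) :=
  ⟨fun x => (x : ℝ) ^ c, (contOn_rpow hc).restrict⟩

lemma approx (lam : ℕ → ℝ) (m : ℝ) (hm : 0 < m) :
    ∀ (Λ : Finset ℕ), (∀ k ∈ Λ, m < lam k) → (Set.InjOn lam ↑Λ) →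
    ∃ a : ℕ → ℝ, ∀ x ∈ Set.Icc (0:ℝ) 1,
      |x ^ m - ∑ k ∈ Λ, a k * x ^ lam k| ≤ ∏ k ∈ Λ, (1 - m / lam k) := by
  intro Λ
  induction Λ using Finset.induction_on with
  | empty =>
    intro _ _
    refine ⟨0, fun x hx => ?_⟩
    simp only [Finset.sum_empty, Finset.prod_empty, Pi.zero_apply, zero_mul, sub_zero]
    rw [abs_of_nonneg (Real.rpow_nonneg hx.1 m)]
    exact Real.rpow_le_one hx.1 hx.2 hm.le
  | @insert j t hj ih =>
    intro hgt hinj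
    obtain ⟨a, ha⟩ := ih (fun k hk => hgt k (Finset.mem_insert_of_mem hk))
      (hinj.mono (by simp [Finset.coe_insert, Set.subset_insert]))
    set L := lam j with hL
    have hmL : m < L := hgt j (Finset.mem_insert_self j t)
    have hLpos : 0 < L := hm.trans hmL
    have hne : ∀ k ∈ t, lam k ≠ L := by
      intro k hk
      intro h
      have hkj : k = j := hinj (by simp [hk]) (by simp) h
      exact hj (hkj ▸ hk)
    -- new coefficients
    set a' : ℕ → ℝ := fun k =>
      if k = j then 1 + ∑ i ∈ t, (L - m) * a i / (lam i - L)
      else -((L - m) * a k / (lam k - L)) with ha'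
    refine ⟨a', fun x hx => ?_⟩
    set B := ∏ k ∈ t, (1 - m / lam k) with hB
    have hBnonneg : 0 ≤ B := Finset.prod_nonneg (fun k hk => by
      have := hgt k (Finset.mem_insert_of_mem hk)
      have hpos : 0 < lam k := hm.trans this
      rw [sub_nonneg, div_le_one hpos]; exact this.le)
    have hfacnn : 0 ≤ 1 - m / L := by
      rw [sub_nonneg, div_le_one hLpos]; exact hmL.le
    rw [Finset.prod_insert hj]
    -- sum over insert
    have hsum : ∀ y : ℝ, ∑ k ∈ insert j t, a' k * y ^ lam k
        = (1 + ∑ i ∈ t, (L - m) * a i / (lam i - L)) * y ^ L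
          + ∑ k ∈ t, -((L - m) * a k / (lam k - L)) * y ^ lam k := by
      intro y
      rw [Finset.sum_insert hj]
      congr 1
      · simp [ha']; left; rfl
      · apply Finset.sum_congr rfl
        intro k hk
        have : k ≠ j := fun h => hj (h ▸ hk)
        simp [ha', this]
    rcases eq_or_lt_of_le hx.1 with hx0 | hx0
    · -- x = 0
      rw [← hx0]
      have z1 : (0:ℝ) ^ m = 0 := Real.zero_rpow hm.ne'
      have z2 : ∀ k ∈ insert j t, (0:ℝ) ^ lam k = 0 := fun k hk =>
        Real.zero_rpow (ne_of_gt (hm.trans (hgt k hk)))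
      rw [z1, Finset.sum_congr rfl (fun k hk => by rw [z2 k hk, mul_zero])]
      simp only [Finset.sum_const_zero, sub_zero, abs_zero]
      exact mul_nonneg hfacnn hBnonneg
    · -- 0 < x ≤ 1
      -- integral representation
      have hx1 : x ≤ 1 := hx.2
      have hIcc : ∀ t' ∈ Set.Icc x 1, (0:ℝ) < t' := fun t' ht' => lt_of_lt_of_le hx0 ht'.1
      have h0notin : (0:ℝ) ∉ Set.uIcc x 1 := by
        rw [Set.uIcc_of_le hx1]
        intro h; exact absurd (hIcc 0 h) (lt_irrefl 0)
      -- integrability on [x,1] of each power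
      have integ : ∀ c : ℝ, IntervalIntegrable (fun u : ℝ => u ^ c) volume x 1 := by
        intro c
        apply ContinuousOn.intervalIntegrable
        intro u hu
        have hu0 : u ≠ 0 := by rw [Set.uIcc_of_le hx1] at hu; exact (hIcc u hu).ne'
        exact (Real.continuousAt_rpow_const u c (Or.inl hu0)).continuousWithinAt
      -- the previous approximant as a function
      set h : ℝ → ℝ := fun u => u ^ m - ∑ k ∈ t, a k * u ^ lam k with hh
      have hcrp : ∀ c : ℝ, ContinuousOn (fun u : ℝ => u ^ c) (Set.Icc x 1) := by
        intro c u hu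
        exact (Real.continuousAt_rpow_const u c (Or.inl (hIcc u hu).ne')).continuousWithinAt
      have hcont : ContinuousOn (fun u : ℝ => h u * u ^ (-1 - L)) (Set.uIcc x 1) := by
        rw [Set.uIcc_of_le hx1]
        exact (((hcrp m).sub (continuousOn_finset_sum t
          (fun k _ => (continuousOn_const.mul (hcrp (lam k)))))).mul (hcrp (-1-L)))
      have hmLne : m - L ≠ 0 := sub_ne_zero.mpr hmL.ne
      have hLne : (L:ℝ) ≠ 0 := hLpos.ne'
      have hPm : x ^ L * x ^ (m - L) = x ^ m := by
        rw [← Real.rpow_add hx0]; ring_nf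
      have hPk : ∀ k ∈ t, x ^ L * x ^ (lam k - L) = x ^ lam k := by
        intro k _
        rw [← Real.rpow_add hx0]; ring_nf
      -- the integral
      set I := ∫ u in x..1, h u * u ^ (-1 - L) with hI
      have e1 : I = (1 - x ^ (m - L)) / (m - L)
          - ∑ k ∈ t, a k * ((1 - x ^ (lam k - L)) / (lam k - L)) := by
        have congr1 : EqOn (fun u : ℝ => h u * u ^ (-1 - L))
            (fun u : ℝ => u ^ (m - 1 - L) - ∑ k ∈ t, a k * u ^ (lam k - 1 - L))
            (Set.uIcc x 1) := by
          intro u hu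
          rw [Set.uIcc_of_le hx1] at hu
          have hu0 : (0:ℝ) < u := hIcc u hu
          simp only [hh]
          rw [sub_mul, Finset.sum_mul]
          congr 1
          · rw [← Real.rpow_add hu0]; ring_nf
          · apply Finset.sum_congr rfl
            intro k _
            rw [mul_assoc, ← Real.rpow_add hu0]; ring_nf
        have integS : IntervalIntegrable (fun u : ℝ => ∑ k ∈ t, a k * u ^ (lam k - 1 - L))
            volume x 1 := by
          apply ContinuousOn.intervalIntegrable
          rw [Set.uIcc_of_le hx1]
          exact continuousOn_finset_sum t
            (fun k _ => continuousOn_const.mul (hcrp (lam k - 1 - L)))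
        rw [hI, intervalIntegral.integral_congr congr1,
          intervalIntegral.integral_sub (integ _) integS,
          intervalIntegral.integral_finset_sum
            (fun k _ => (integ (lam k - 1 - L)).const_mul (a k))]
        congr 1
        · rw [integral_rpow (Or.inr ⟨by intro hc; apply hmLne; linarith [hc], h0notin⟩)]
          have : m - 1 - L + 1 = m - L := by ring
          rw [this, Real.one_rpow]
        · apply Finset.sum_congr rfl
          intro k hk
          rw [intervalIntegral.integral_const_mul]
          congr 1
          have hkne : lam k - L ≠ 0 := sub_ne_zero.mpr (hne k hk)
          rw [integral_rpow (Or.inr ⟨by intro hc; apply hkne; linarith [hc], h0notin⟩)]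
          have : lam k - 1 - L + 1 = lam k - L := by ring
          rw [this, Real.one_rpow]
      -- identity
      have main0 : (L - m) * x ^ L * ((1 - x ^ (m - L)) / (m - L)) = x ^ m - x ^ L := by
        rw [← hPm]
        field_simp
        ring
      have perk : ∀ k ∈ t, (L - m) * x ^ L * (a k * ((1 - x ^ (lam k - L)) / (lam k - L)))
          = (L - m) * a k / (lam k - L) * x ^ L
            - (L - m) * a k / (lam k - L) * x ^ lam k := by
        intro k hk
        have hkne : lam k - L ≠ 0 := sub_ne_zero.mpr (hne k hk)
        rw [← hPk k hk]
        field_simp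
      have e2 : x ^ m - ∑ k ∈ insert j t, a' k * x ^ lam k = (L - m) * x ^ L * I := by
        have hneg : ∑ k ∈ t, -((L - m) * a k / (lam k - L)) * x ^ lam k
            = -∑ k ∈ t, (L - m) * a k / (lam k - L) * x ^ lam k := by
          rw [← Finset.sum_neg_distrib]
          apply Finset.sum_congr rfl; intro k _; ring
        rw [hsum x, e1, mul_sub, Finset.mul_sum, main0,
          Finset.sum_congr rfl perk, Finset.sum_sub_distrib, ← Finset.sum_mul, hneg]
        ring
      -- bound
      have hxLpos : (0:ℝ) < x ^ L := Real.rpow_pos_of_pos hx0 L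
      have habs : ∀ u ∈ Set.Icc x 1, |h u * u ^ (-1 - L)| ≤ B * u ^ (-1 - L) := by
        intro u hu
        have hu0 : (0:ℝ) < u := hIcc u hu
        have hunn : (0:ℝ) ≤ u ^ (-1 - L) := Real.rpow_nonneg hu0.le _
        rw [abs_mul, abs_of_nonneg hunn]
        apply mul_le_mul_of_nonneg_right _ hunn
        exact ha u ⟨le_trans hx.1 hu.1, hu.2⟩
      have hintabs : IntervalIntegrable (fun u => |h u * u ^ (-1 - L)|) volume x 1 :=
        hcont.abs.intervalIntegrable
      have hintB : IntervalIntegrable (fun u => B * u ^ (-1 - L)) volume x 1 :=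
        (integ (-1 - L)).const_mul B
      have hIbound : |I| ≤ B * ((x ^ (-L) - 1) / L) := by
        calc |I| ≤ ∫ u in x..1, |h u * u ^ (-1 - L)| :=
              intervalIntegral.abs_integral_le_integral_abs hx1
          _ ≤ ∫ u in x..1, B * u ^ (-1 - L) :=
              intervalIntegral.integral_mono_on hx1 hintabs hintB habs
          _ = B * ((x ^ (-L) - 1) / L) := by
              rw [intervalIntegral.integral_const_mul]
              congr 1
              rw [integral_rpow (Or.inr ⟨by intro hc; apply hLne; linarith [hc], h0notin⟩)]
              have h1 : -1 - L + 1 = -L := by ring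
              rw [h1, Real.one_rpow, div_neg, ← neg_div, neg_sub]
      have hxLL : x ^ L * x ^ (-L) = 1 := by
        rw [← Real.rpow_add hx0]
        simp
      rw [e2, abs_mul, abs_mul]
      rw [abs_of_nonneg (sub_nonneg.mpr hmL.le), abs_of_nonneg hxLpos.le]
      have hxLm1 : x ^ L * (x ^ (-L) - 1) = 1 - x ^ L := by
        rw [mul_sub, hxLL, mul_one]
      calc (L - m) * x ^ L * |I| ≤ (L - m) * x ^ L * (B * ((x ^ (-L) - 1) / L)) :=
            mul_le_mul_of_nonneg_left hIbound
              (mul_nonneg (sub_nonneg.mpr hmL.le) hxLpos.le)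
        _ = (L - m) / L * B * (x ^ L * (x ^ (-L) - 1)) := by ring
        _ = (1 - m / L) * B * (1 - x ^ L) := by rw [hxLm1, sub_div, div_self hLne]
        _ ≤ (1 - m / L) * B * 1 := by
            apply mul_le_mul_of_nonneg_left _ (mul_nonneg hfacnn hBnonneg)
            have := Real.rpow_nonneg hx0.le L
            linarith
        _ = (1 - m / L) * B := mul_one _

lemma dual (lam : ℕ → ℝ) (m : ℝ) (hm : 0 < m) (s : Finset ℕ)
    (hpos : ∀ k ∈ s, 0 ≤ lam k) (hinj : Set.InjOn lam ↑s)
    (hne : ∀ k ∈ s, lam k ≠ m) (b : ℕ → ℝ) (d : ℝ) (hd0 : 0 ≤ d)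
    (hd : ∀ x ∈ Set.Icc (0:ℝ) 1, |x ^ m - ∑ k ∈ s, b k * x ^ lam k| ≤ d) :
    (∏ k ∈ s, ((m - lam k) ^ 2 / (m + lam k + 1) ^ 2)) / (2 * m + 1) ≤ d ^ 2 := by
  classical
  set t : ℕ → ℝ := fun k => -(lam k + 1) with ht
  set tm : ℝ := -(m + 1) with htm
  have hmne : ∀ k ∈ s, m - lam k ≠ 0 := fun k hk => sub_ne_zero.mpr (Ne.symm (hne k hk))
  have hPd : ∀ k ∈ s, (0:ℝ) < m + lam k + 1 := fun k hk => by
    have := hpos k hk; linarith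
  set γ : ℝ := ∏ k ∈ s, ((m + lam k + 1) / (m - lam k)) with hγ
  set c : ℕ → ℝ := fun i =>
    (∏ k ∈ s, (t i - lam k)) / ((m - lam i) * ∏ j ∈ s.erase i, (lam j - lam i)) with hc
  set g : ℝ → ℝ := fun x => γ * x ^ m + ∑ i ∈ s, c i * x ^ lam i with hg
  set φ : ℝ → ℝ := fun u => γ / (u + m + 1) + ∑ i ∈ s, c i / (u + lam i + 1) with hφ
  -- Step A : polynomial identity
  set N : Polynomial ℝ := ∏ k ∈ s, (X - C (lam k)) with hN
  set P : Polynomial ℝ := C γ * ∏ j ∈ s, (X - C (t j))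
    + ∑ i ∈ s, C (c i) * ((X - C tm) * ∏ j ∈ s.erase i, (X - C (t j))) with hP
  have htinj : Set.InjOn t ↑s := by
    intro a ha b hb hab
    apply hinj ha hb
    simp only [ht] at hab
    linarith
  have httm : ∀ k ∈ s, t k ≠ tm := by
    intro k hk h
    simp only [ht, htm] at h
    exact hne k hk (by linarith)
  have hPN : P = N := by
    set v : Option ℕ → ℝ := fun o => o.elim tm t with hv
    set s' : Finset (Option ℕ) := insert none (s.image some) with hs'
    have hnone : none ∉ s.image some := by simp
    have hcard : s'.card = s.card + 1 := by
      rw [hs', Finset.card_insert_of_notMem hnone,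
        Finset.card_image_of_injective _ (Option.some_injective ℕ)]
    have hinj' : Set.InjOn v ↑s' := by
      intro a ha b hb hab
      rw [hs'] at ha hb
      simp only [Finset.coe_insert, Set.mem_insert_iff, Finset.coe_image, Set.mem_image,
        Finset.mem_coe] at ha hb
      rcases ha with rfl | ⟨xa, hxa, rfl⟩ <;> rcases hb with rfl | ⟨xb, hxb, rfl⟩
      · rfl
      · exact absurd hab.symm (by simpa [hv] using httm xb hxb)
      · exact absurd hab (by simpa [hv] using httm xa hxa)
      · have := htinj hxa hxb (by simpa [hv] using hab)
        rw [this]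
    -- degree bounds
    have hdegN : N.natDegree ≤ s.card := by
      apply le_trans (Polynomial.natDegree_prod_le _ _)
      apply le_trans (Finset.sum_le_card_nsmul s _ 1
        (fun k _ => le_of_eq (natDegree_X_sub_C _)))
      simp
    have hdegP : P.natDegree ≤ s.card := by
      rw [hP]
      apply le_trans (Polynomial.natDegree_add_le _ _)
      apply max_le
      · apply le_trans (Polynomial.natDegree_mul_le)
        have h1 : (∏ j ∈ s, (X - C (t j))).natDegree ≤ s.card := by
          apply le_trans (Polynomial.natDegree_prod_le _ _)
          apply le_trans (Finset.sum_le_card_nsmul s _ 1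
            (fun k _ => le_of_eq (natDegree_X_sub_C _)))
          simp
        simpa [Polynomial.natDegree_C] using h1
      · apply Polynomial.natDegree_sum_le_of_forall_le
        intro i hi
        apply le_trans (Polynomial.natDegree_mul_le)
        have h2 : ((X - C tm) * ∏ j ∈ s.erase i, (X - C (t j))).natDegree ≤ s.card := by
          apply le_trans (Polynomial.natDegree_mul_le)
          have h3 : (∏ j ∈ s.erase i, (X - C (t j))).natDegree ≤ s.card - 1 := by
            apply le_trans (Polynomial.natDegree_prod_le _ _)
            apply le_trans (Finset.sum_le_card_nsmul _ _ 1
              (fun k _ => le_of_eq (natDegree_X_sub_C _)))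
            simp [Finset.card_erase_of_mem hi]
          have h4 : 1 ≤ s.card := Finset.card_pos.mpr ⟨i, hi⟩
          have := natDegree_X_sub_C (R := ℝ) tm
          omega
        simpa [Polynomial.natDegree_C] using h2
    -- evaluations agree
    have heval : ∀ o ∈ s', Polynomial.eval (v o) P = Polynomial.eval (v o) N := by
      intro o ho
      have hevalN' : ∀ u : ℝ, Polynomial.eval u N = ∏ k ∈ s, (u - lam k) := by
        intro u; rw [hN]; simp [eval_prod]
      have hevalPgen : ∀ u : ℝ, Polynomial.eval u P
          = γ * ∏ j ∈ s, (u - t j)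
            + ∑ i ∈ s, c i * ((u - tm) * ∏ j ∈ s.erase i, (u - t j)) := by
        intro u; rw [hP]; simp [eval_prod, eval_finset_sum]
      rw [hs'] at ho
      rcases Finset.mem_insert.mp ho with rfl | hsome
      · -- o = none, v none = tm
        have hvn : v none = tm := rfl
        rw [hvn, hevalPgen, hevalN']
        have hz : ∑ i ∈ s, c i * ((tm - tm) * ∏ j ∈ s.erase i, (tm - t j)) = 0 := by
          apply Finset.sum_eq_zero
          intro i _
          rw [sub_self, zero_mul, mul_zero]
        rw [hz, add_zero, hγ, ← Finset.prod_mul_distrib]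
        apply Finset.prod_congr rfl
        intro k hk
        have h1 : m - lam k ≠ 0 := hmne k hk
        simp only [ht, htm]
        field_simp
        ring
      · -- o = some i
        obtain ⟨i, hi, rfl⟩ := Finset.mem_image.mp hsome
        have hvi : v (some i) = t i := rfl
        rw [hvi, hevalPgen, hevalN']
        have hz1 : γ * ∏ j ∈ s, (t i - t j) = 0 := by
          rw [Finset.prod_eq_zero hi (sub_self (t i)), mul_zero]
        rw [hz1, zero_add]
        rw [Finset.sum_eq_single i ?_ (fun h => absurd hi h)]
        · have e1 : t i - tm = m - lam i := by simp only [ht, htm]; ring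
          have e2 : ∏ j ∈ s.erase i, (t i - t j) = ∏ j ∈ s.erase i, (lam j - lam i) := by
            apply Finset.prod_congr rfl
            intro j _; simp only [ht]; ring
          rw [e1, e2, hc]
          have hden : (m - lam i) * ∏ j ∈ s.erase i, (lam j - lam i) ≠ 0 := by
            apply mul_ne_zero (hmne i hi)
            apply Finset.prod_ne_zero_iff.mpr
            intro j hj
            have hji : j ≠ i := (Finset.mem_erase.mp hj).1
            have hjs : j ∈ s := (Finset.mem_erase.mp hj).2
            exact sub_ne_zero.mpr (fun h => hji (hinj hjs hi h))
          exact div_mul_cancel₀ _ hden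
        · intro j hj hji
          have hiej : i ∈ s.erase j := Finset.mem_erase.mpr ⟨Ne.symm hji, hi⟩
          rw [Finset.prod_eq_zero hiej (sub_self (t i)), mul_zero, mul_zero]
    -- conclude by interpolation
    apply Polynomial.eq_of_degrees_lt_of_eval_index_eq s' hinj' ?_ ?_ heval
    · calc P.degree ≤ (P.natDegree : WithBot ℕ) := Polynomial.degree_le_natDegree
        _ ≤ (s.card : WithBot ℕ) := by exact_mod_cast hdegP
        _ < ((s.card + 1 : ℕ) : WithBot ℕ) := by exact_mod_cast lt_add_one s.card
        _ = (s'.card : WithBot ℕ) := by rw [hcard]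
    · calc N.degree ≤ (N.natDegree : WithBot ℕ) := Polynomial.degree_le_natDegree
        _ ≤ (s.card : WithBot ℕ) := by exact_mod_cast hdegN
        _ < ((s.card + 1 : ℕ) : WithBot ℕ) := by exact_mod_cast lt_add_one s.card
        _ = (s'.card : WithBot ℕ) := by rw [hcard]
  -- Step B : values of φ
  have hevalP : ∀ u : ℝ, Polynomial.eval u P
      = γ * ∏ j ∈ s, (u + lam j + 1)
        + ∑ i ∈ s, c i * ((u + m + 1) * ∏ j ∈ s.erase i, (u + lam j + 1)) := by
    intro u
    rw [hP]
    simp only [eval_add, eval_mul, eval_C, eval_prod, eval_finset_sum, eval_sub, eval_X]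
    congr 1
    · congr 1
      apply Finset.prod_congr rfl
      intro j _; rw [ht]; ring
    · apply Finset.sum_congr rfl
      intro i _
      congr 2
      · rw [htm]; ring
      · apply Finset.prod_congr rfl
        intro j _; rw [ht]; ring
  have hφD : ∀ u : ℝ, 0 ≤ u → (∀ k ∈ s, 0 < u + lam k + 1) →
      φ u * ((u + m + 1) * ∏ j ∈ s, (u + lam j + 1)) = Polynomial.eval u P := by
    intro u hu hden
    have hum : u + m + 1 ≠ 0 := by positivity
    rw [hevalP u, hφ]
    rw [add_mul, Finset.sum_mul]
    congr 1
    · field_simp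
    · apply Finset.sum_congr rfl
      intro i hi
      have h1 : u + lam i + 1 ≠ 0 := (hden i hi).ne'
      rw [← Finset.mul_prod_erase s _ hi]
      field_simp
  have hevalN : ∀ u : ℝ, Polynomial.eval u N = ∏ k ∈ s, (u - lam k) := by
    intro u
    rw [hN]
    simp [eval_prod]
  have hroot : ∀ k ∈ s, φ (lam k) = 0 := by
    intro k hk
    have hden : ∀ j ∈ s, 0 < lam k + lam j + 1 := fun j hj => by
      have := hpos j hj; have := hpos k hk; linarith
    have h1 := hφD (lam k) (hpos k hk) hden
    rw [hPN, hevalN] at h1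
    have h2 : ∏ j ∈ s, (lam k - lam j) = 0 :=
      Finset.prod_eq_zero hk (by ring)
    have h3 : (lam k + m + 1) * ∏ j ∈ s, (lam k + lam j + 1) ≠ 0 := by
      apply mul_ne_zero
      · have := hpos k hk; positivity
      · apply Finset.prod_ne_zero_iff.mpr
        intro j hj; exact (hden j hj).ne'
    rw [h2] at h1
    exact (mul_eq_zero.mp h1).resolve_right h3
  have hφm : φ m * ((m + m + 1) * ∏ j ∈ s, (m + lam j + 1)) = ∏ k ∈ s, (m - lam k) := by
    have hden : ∀ j ∈ s, 0 < m + lam j + 1 := hPd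
    have h1 := hφD m hm.le hden
    rw [hPN, hevalN] at h1
    exact h1
  -- products
  set Pn : ℝ := ∏ k ∈ s, (m - lam k) with hPn
  set Pd2 : ℝ := ∏ k ∈ s, (m + lam k + 1) with hPd2
  have hPdpos : 0 < Pd2 := Finset.prod_pos hPd
  have hPnne : Pn ≠ 0 := Finset.prod_ne_zero_iff.mpr hmne
  have h2m : (0:ℝ) < 2 * m + 1 := by linarith
  have hγval : γ = Pd2 / Pn := by
    rw [hγ, hPd2, hPn, ← Finset.prod_div_distrib]
  have hγne : γ ≠ 0 := by
    rw [hγval]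
    exact div_ne_zero hPdpos.ne' hPnne
  have hφmval : φ m = Pn / ((2 * m + 1) * Pd2) := by
    have hden : (m + m + 1) * Pd2 ≠ 0 := by
      apply mul_ne_zero (by linarith) hPdpos.ne'
    rw [eq_div_iff (by rw [show (2:ℝ)*m+1 = m+m+1 by ring]; exact hden)]
    rw [show (2:ℝ)*m+1 = m+m+1 by ring, ← mul_assoc]
    rw [← hφm]
    ring
  -- Step C : integrals
  have hgc : ContinuousOn g (Set.Icc 0 1) := by
    apply ContinuousOn.add
    · exact continuousOn_const.mul (contOn_rpow hm.le)
    · exact continuousOn_finset_sum s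
        (fun i hi => continuousOn_const.mul (contOn_rpow (hpos i hi)))
  have hint : ∀ u : ℝ, 0 ≤ u → (∫ x in (0:ℝ)..1, g x * x ^ u) = φ u := by
    intro u hu
    have congr1 : Set.EqOn (fun x : ℝ => g x * x ^ u)
        (fun x : ℝ => γ * x ^ (m + u) + ∑ i ∈ s, c i * x ^ (lam i + u))
        (Set.uIcc 0 1) := by
      intro x hx
      rw [Set.uIcc_of_le (zero_le_one' ℝ)] at hx
      simp only [hg]
      rw [add_mul, Finset.sum_mul]
      congr 1
      · rw [mul_assoc, rpow_mul_rpow hx.1 hm.le hu]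
      · apply Finset.sum_congr rfl
        intro i hi
        rw [mul_assoc, rpow_mul_rpow hx.1 (hpos i hi) hu]
    rw [intervalIntegral.integral_congr congr1]
    have hintsum : IntervalIntegrable (fun x : ℝ => ∑ i ∈ s, c i * x ^ (lam i + u))
        volume 0 1 := integrable01 (continuousOn_finset_sum s
          (fun i hi => continuousOn_const.mul (contOn_rpow (by have := hpos i hi; linarith))))
    rw [intervalIntegral.integral_add
      (integrable01 (f := fun x => γ * x ^ (m + u))
        (continuousOn_const.mul (contOn_rpow (by linarith)))) hintsum]
    rw [intervalIntegral.integral_const_mul, integral_rpow01 (by linarith),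
      intervalIntegral.integral_finset_sum (fun i hi => (integrable01
        (contOn_rpow (by have := hpos i hi; linarith))).const_mul _)]
    rw [hφ]
    congr 1
    · rw [show m + u + 1 = u + m + 1 by ring]; ring
    · apply Finset.sum_congr rfl
      intro i hi
      rw [intervalIntegral.integral_const_mul, integral_rpow01 (by have := hpos i hi; linarith)]
      rw [show lam i + u + 1 = u + lam i + 1 by ring]
      ring
  -- pairing with the approximation error
  set p : ℝ → ℝ := fun x => ∑ k ∈ s, b k * x ^ lam k with hp
  have hpc : ContinuousOn p (Set.Icc 0 1) := continuousOn_finset_sum s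
    (fun k hk => continuousOn_const.mul (contOn_rpow (hpos k hk)))
  have hfpc : ContinuousOn (fun x : ℝ => x ^ m - p x) (Set.Icc 0 1) :=
    (contOn_rpow hm.le).sub hpc
  have hpair : (∫ x in (0:ℝ)..1, g x * (x ^ m - p x)) = φ m := by
    have congr1 : Set.EqOn (fun x : ℝ => g x * (x ^ m - p x))
        (fun x : ℝ => g x * x ^ m - ∑ k ∈ s, b k * (g x * x ^ lam k)) (Set.uIcc 0 1) := by
      intro x _
      simp only [hp]
      rw [mul_sub, Finset.mul_sum]
      congr 1
      apply Finset.sum_congr rfl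
      intro k _; ring
    rw [intervalIntegral.integral_congr congr1]
    have hi1 : IntervalIntegrable (fun x : ℝ => g x * x ^ m) volume 0 1 :=
      integrable01 (hgc.mul (contOn_rpow hm.le))
    have hi2 : ∀ k ∈ s, IntervalIntegrable (fun x : ℝ => b k * (g x * x ^ lam k)) volume 0 1 :=
      fun k hk => (integrable01 (hgc.mul (contOn_rpow (hpos k hk)))).const_mul _
    have hi2sum : IntervalIntegrable (fun x : ℝ => ∑ k ∈ s, b k * (g x * x ^ lam k))
        volume 0 1 := integrable01 (continuousOn_finset_sum s
          (fun k hk => continuousOn_const.mul (hgc.mul (contOn_rpow (hpos k hk)))))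
    rw [intervalIntegral.integral_sub hi1 hi2sum,
      intervalIntegral.integral_finset_sum hi2]
    rw [hint m hm.le]
    have : ∀ k ∈ s, (∫ x in (0:ℝ)..1, b k * (g x * x ^ lam k)) = 0 := by
      intro k hk
      rw [intervalIntegral.integral_const_mul, hint (lam k) (hpos k hk), hroot k hk, mul_zero]
    rw [Finset.sum_congr rfl this, Finset.sum_const_zero, sub_zero]
  have hgg : (∫ x in (0:ℝ)..1, g x ^ 2) = γ * φ m := by
    have congr1 : Set.EqOn (fun x : ℝ => g x ^ 2)
        (fun x : ℝ => γ * (g x * x ^ m) + ∑ i ∈ s, c i * (g x * x ^ lam i))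
        (Set.uIcc 0 1) := by
      intro x _
      have hgx : g x = γ * x ^ m + ∑ i ∈ s, c i * x ^ lam i := rfl
      calc g x ^ 2 = g x * (γ * x ^ m + ∑ i ∈ s, c i * x ^ lam i) := by rw [← hgx, sq]
        _ = γ * (g x * x ^ m) + ∑ i ∈ s, c i * (g x * x ^ lam i) := by
            rw [mul_add, Finset.mul_sum]
            congr 1
            · ring
            · exact Finset.sum_congr rfl (fun i _ => by ring)
    rw [intervalIntegral.integral_congr congr1]
    have hi1 : IntervalIntegrable (fun x : ℝ => γ * (g x * x ^ m)) volume 0 1 :=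
      (integrable01 (hgc.mul (contOn_rpow hm.le))).const_mul _
    have hi2 : ∀ i ∈ s, IntervalIntegrable (fun x : ℝ => c i * (g x * x ^ lam i)) volume 0 1 :=
      fun i hi => (integrable01 (hgc.mul (contOn_rpow (hpos i hi)))).const_mul _
    have hi2sum : IntervalIntegrable (fun x : ℝ => ∑ i ∈ s, c i * (g x * x ^ lam i))
        volume 0 1 := integrable01 (continuousOn_finset_sum s
          (fun i hi => continuousOn_const.mul (hgc.mul (contOn_rpow (hpos i hi)))))
    rw [intervalIntegral.integral_add (by exact hi1) hi2sum,
      intervalIntegral.integral_finset_sum hi2,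
      intervalIntegral.integral_const_mul, hint m hm.le]
    have : ∀ i ∈ s, (∫ x in (0:ℝ)..1, c i * (g x * x ^ lam i)) = 0 := by
      intro i hi
      rw [intervalIntegral.integral_const_mul, hint (lam i) (hpos i hi), hroot i hi, mul_zero]
    rw [Finset.sum_congr rfl this, Finset.sum_const_zero, add_zero]
  -- Step D : Cauchy–Schwarz
  have hCS := cauchy_schwarz hgc hfpc
  have herr : (∫ x in (0:ℝ)..1, (x ^ m - p x) ^ 2) ≤ d ^ 2 := by
    have h1 : ∀ x ∈ Set.Icc (0:ℝ) 1, (x ^ m - p x) ^ 2 ≤ d ^ 2 := by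
      intro x hx
      have h2 := abs_le.mp (hd x hx)
      simp only [hp]
      nlinarith [h2.1, h2.2]
    calc (∫ x in (0:ℝ)..1, (x ^ m - p x) ^ 2)
        ≤ ∫ _x in (0:ℝ)..1, d ^ 2 := by
          apply intervalIntegral.integral_mono_on (zero_le_one' ℝ)
            (integrable01 (hfpc.pow 2)) intervalIntegrable_const h1
      _ = d ^ 2 := by simp
  have hCS2 : φ m ^ 2 ≤ γ * φ m * d ^ 2 := by
    have h1 : (∫ x in (0:ℝ)..1, g x * (x ^ m - p x)) ^ 2
        ≤ (∫ x in (0:ℝ)..1, g x ^ 2) * ∫ x in (0:ℝ)..1, (x ^ m - p x) ^ 2 := hCS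
    rw [hpair, hgg] at h1
    have hg2 : (0:ℝ) ≤ γ * φ m := by
      rw [← hgg]
      apply intervalIntegral.integral_nonneg (zero_le_one' ℝ)
      intro x _; positivity
    calc φ m ^ 2 ≤ γ * φ m * ∫ x in (0:ℝ)..1, (x ^ m - p x) ^ 2 := h1
      _ ≤ γ * φ m * d ^ 2 := by
          apply mul_le_mul_of_nonneg_left herr hg2
  -- final algebra
  have hprodval : (∏ k ∈ s, ((m - lam k) ^ 2 / (m + lam k + 1) ^ 2)) = Pn ^ 2 / Pd2 ^ 2 := by
    rw [hPn, hPd2, ← Finset.prod_pow, ← Finset.prod_pow, ← Finset.prod_div_distrib]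
  rw [hprodval]
  have hφmne : φ m ≠ 0 := by
    rw [hφmval]
    exact div_ne_zero hPnne (by positivity)
  have key : γ * φ m = 1 / (2 * m + 1) := by
    rw [hγval, hφmval]
    field_simp
  have hφmsq : φ m ^ 2 = (Pn ^ 2 / Pd2 ^ 2) / (2 * m + 1) * (1 / (2 * m + 1)) := by
    rw [hφmval]
    field_simp
  rw [key] at hCS2
  rw [hφmsq] at hCS2
  have h2mpos : (0:ℝ) < 1 / (2 * m + 1) := by positivity
  rw [mul_comm (1 / (2*m+1)) (d ^ 2)] at hCS2
  exact le_of_mul_le_mul_right hCS2 h2mpos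

lemma backward (lam : ℕ → ℝ) (hmono : StrictMono lam)
    (htop : Filter.Tendsto lam Filter.atTop Filter.atTop)
    (h0 : lam 0 = 0)
    (hdiv : Filter.Tendsto (fun n : ℕ => ∑ k ∈ Finset.Icc 1 n, 1 / lam k)
      Filter.atTop Filter.atTop) :
    Dense (Submodule.span ℝ
        {F : C(Set.Icc (0:ℝ) 1, ℝ) |
          ∃ k : ℕ, ∀ x : Set.Icc (0:ℝ) 1, F x = (x : ℝ) ^ lam k} :
        Set C(Set.Icc (0:ℝ) 1, ℝ)) := by
  set S : Set C(Set.Icc (0:ℝ) 1, ℝ) :=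
    {F | ∃ k : ℕ, ∀ x : Set.Icc (0:ℝ) 1, F x = (x : ℝ) ^ lam k} with hS
  have hpos : ∀ k, 0 ≤ lam k := fun k => h0 ▸ hmono.monotone (Nat.zero_le k)
  -- monomials x ↦ x^n are in the closure of the span
  have hXn : ∀ n : ℕ, (⟨fun x => (x:ℝ)^n, (continuous_subtype_val.pow n)⟩ :
      C(Set.Icc (0:ℝ) 1, ℝ)) ∈ closure (Submodule.span ℝ S : Set C(Set.Icc (0:ℝ) 1, ℝ)) := by
    intro n
    rcases Nat.eq_zero_or_pos n with hn | hn
    · subst hn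
      apply subset_closure
      apply Submodule.subset_span
      refine ⟨0, fun x => ?_⟩
      simp [h0]
    rw [Metric.mem_closure_iff]
    intro ε hε
    set m : ℝ := (n : ℝ) with hmdef
    have hm : 0 < m := by rw [hmdef]; exact_mod_cast hn
    obtain ⟨K₀, hK₀⟩ := Filter.eventually_atTop.mp (htop.eventually (Filter.eventually_gt_atTop m))
    set K := max K₀ 1 with hKdef
    have hK : ∀ k ≥ K, m < lam k := fun k hk => hK₀ k (le_trans (le_max_left _ _) hk)
    have hK1 : 1 ≤ K := le_max_right _ _
    -- tail sums tend to infinity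
    have htail : Filter.Tendsto (fun N : ℕ => ∑ k ∈ Finset.Icc K N, 1 / lam k)
        Filter.atTop Filter.atTop := by
      have hshift : Filter.Tendsto
          (fun N : ℕ => (∑ k ∈ Finset.Icc 1 N, 1 / lam k) - ∑ k ∈ Finset.Icc 1 (K-1), 1 / lam k)
          Filter.atTop Filter.atTop :=
        Filter.tendsto_atTop_add_const_right _ _ hdiv
      apply hshift.congr'
      filter_upwards [Filter.eventually_ge_atTop (K-1)] with N hN
      have hcons : (∑ k ∈ Finset.Ioc 0 (K-1), 1 / lam k) + ∑ k ∈ Finset.Ioc (K-1) N, 1 / lam k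
          = ∑ k ∈ Finset.Ioc 0 N, 1 / lam k :=
        Finset.sum_Ioc_consecutive _ (Nat.zero_le _) hN
      have h1 : Finset.Icc 1 N = Finset.Ioc 0 N := by rw [← Finset.Icc_add_one_left_eq_Ioc, zero_add]
      have h2 : Finset.Icc 1 (K-1) = Finset.Ioc 0 (K-1) := by rw [← Finset.Icc_add_one_left_eq_Ioc, zero_add]
      have h3 : Finset.Icc K N = Finset.Ioc (K-1) N := by
        rw [← Finset.Icc_add_one_left_eq_Ioc, Nat.sub_add_cancel hK1]
      rw [h1, h2, h3, ← hcons]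
      ring
    -- choose N with product < ε
    obtain ⟨N, hNK, hNbig⟩ : ∃ N, K ≤ N ∧ (-Real.log ε) / m < ∑ k ∈ Finset.Icc K N, 1 / lam k := by
      have := (Filter.eventually_ge_atTop K).and (htail.eventually_gt_atTop ((-Real.log ε) / m))
      obtain ⟨N, h1, h2⟩ := this.exists
      exact ⟨N, h1, h2⟩
    have hNprod : ∏ k ∈ Finset.Icc K N, (1 - m / lam k) < ε := by
      have hle : ∏ k ∈ Finset.Icc K N, (1 - m / lam k)
          ≤ ∏ k ∈ Finset.Icc K N, Real.exp (-(m / lam k)) := by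
        apply Finset.prod_le_prod
        · intro k hk
          have hmk := hK k (Finset.mem_Icc.mp hk).1
          have : 0 < lam k := hm.trans hmk
          rw [sub_nonneg, div_le_one this]
          exact hmk.le
        · intro k hk
          have := Real.add_one_le_exp (-(m / lam k))
          linarith
      have hexp : ∏ k ∈ Finset.Icc K N, Real.exp (-(m / lam k))
          = Real.exp (-m * ∑ k ∈ Finset.Icc K N, 1 / lam k) := by
        rw [← Real.exp_sum]
        congr 1
        rw [Finset.mul_sum]
        apply Finset.sum_congr rfl
        intro k _
        ring
      have hlt : Real.exp (-m * ∑ k ∈ Finset.Icc K N, 1 / lam k) < ε := by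
        have h1 : -m * (∑ k ∈ Finset.Icc K N, 1 / lam k) < Real.log ε := by
          have := (div_lt_iff₀ hm).mp hNbig
          linarith
        calc Real.exp (-m * ∑ k ∈ Finset.Icc K N, 1 / lam k)
            < Real.exp (Real.log ε) := Real.exp_lt_exp.mpr h1
          _ = ε := Real.exp_log hε
      linarith
    -- build the approximant
    obtain ⟨a, ha⟩ := approx lam m hm (Finset.Icc K N)
      (fun k hk => hK k (Finset.mem_Icc.mp hk).1) (hmono.injective.injOn)
    refine ⟨∑ k ∈ Finset.Icc K N, a k • powCM (lam k) (hpos k), ?_, ?_⟩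
    · apply Submodule.sum_mem
      intro k _
      exact Submodule.smul_mem _ _ (Submodule.subset_span ⟨k, fun x => rfl⟩)
    · have hdle : dist (⟨fun x => (x:ℝ)^n, (continuous_subtype_val.pow n)⟩ :
          C(Set.Icc (0:ℝ) 1, ℝ)) (∑ k ∈ Finset.Icc K N, a k • powCM (lam k) (hpos k))
          ≤ ∏ k ∈ Finset.Icc K N, (1 - m / lam k) := by
        apply (ContinuousMap.dist_le ?_).mpr
        · intro x
          have happ := ha (x : ℝ) x.2
          rw [Real.dist_eq]
          have hx : ((x:ℝ)) ^ n = ((x:ℝ)) ^ m := (Real.rpow_natCast _ n).symm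
          have hsum : (∑ k ∈ Finset.Icc K N, a k • powCM (lam k) (hpos k)) x
              = ∑ k ∈ Finset.Icc K N, a k * (x:ℝ) ^ lam k := by
            rw [ContinuousMap.sum_apply]
            apply Finset.sum_congr rfl
            intro k _
            rfl
          rw [ContinuousMap.coe_mk, hsum, hx]
          exact happ
        · apply Finset.prod_nonneg
          intro k hk
          have hmk := hK k (Finset.mem_Icc.mp hk).1
          rw [sub_nonneg, div_le_one (hm.trans hmk)]
          exact hmk.le
      exact lt_of_le_of_lt hdle hNprod
  -- polynomials are in the closure
  have hpoly : ∀ p : Polynomial ℝ, p.toContinuousMapOn (Set.Icc (0:ℝ) 1)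
      ∈ (Submodule.span ℝ S).topologicalClosure := by
    intro p
    induction p using Polynomial.induction_on' with
    | add p q hp hq =>
      have : (p + q).toContinuousMapOn (Set.Icc (0:ℝ) 1)
          = p.toContinuousMapOn _ + q.toContinuousMapOn _ := by
        ext x; simp [Polynomial.toContinuousMapOn, Polynomial.toContinuousMap]
      rw [this]
      exact Submodule.add_mem _ hp hq
    | monomial n b =>
      have : (Polynomial.monomial n b).toContinuousMapOn (Set.Icc (0:ℝ) 1)
          = b • (⟨fun x => (x:ℝ)^n, (continuous_subtype_val.pow n)⟩ :
              C(Set.Icc (0:ℝ) 1, ℝ)) := by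
        ext x
        simp [Polynomial.toContinuousMapOn, Polynomial.toContinuousMap, Polynomial.eval_monomial]
      rw [this]
      exact Submodule.smul_mem _ _ (hXn n)
  -- conclude
  rw [dense_iff_closure_eq]
  apply Set.eq_univ_of_univ_subset
  have h1 : (polynomialFunctions (Set.Icc (0:ℝ) 1) : Set C(Set.Icc (0:ℝ) 1, ℝ))
      ⊆ closure (Submodule.span ℝ S : Set C(Set.Icc (0:ℝ) 1, ℝ)) := by
    intro F hF
    rw [polynomialFunctions_coe] at hF
    obtain ⟨p, rfl⟩ := hF
    exact hpoly p
  have h2 := congrArg (fun A : Subalgebra ℝ C(Set.Icc (0:ℝ) 1, ℝ) =>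
    (A : Set C(Set.Icc (0:ℝ) 1, ℝ))) (polynomialFunctions_closure_eq_top 0 1)
  simp only [Subalgebra.topologicalClosure_coe, Algebra.coe_top] at h2
  calc Set.univ = closure (polynomialFunctions (Set.Icc (0:ℝ) 1) :
        Set C(Set.Icc (0:ℝ) 1, ℝ)) := h2.symm
    _ ⊆ closure (closure (Submodule.span ℝ S : Set C(Set.Icc (0:ℝ) 1, ℝ))) := closure_mono h1
    _ = closure (Submodule.span ℝ S : Set C(Set.Icc (0:ℝ) 1, ℝ)) := closure_closure

lemma wprod (u : Finset ℕ) (a : ℕ → ℝ) (h0 : ∀ k ∈ u, 0 ≤ a k) (h1 : ∀ k ∈ u, a k ≤ 1) :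
    1 - ∑ k ∈ u, a k ≤ ∏ k ∈ u, (1 - a k) := by
  induction u using Finset.induction_on with
  | empty => simp
  | @insert j t hj ih =>
    rw [Finset.sum_insert hj, Finset.prod_insert hj]
    have ih' := ih (fun k hk => h0 k (Finset.mem_insert_of_mem hk))
      (fun k hk => h1 k (Finset.mem_insert_of_mem hk))
    have hSnn : 0 ≤ ∑ k ∈ t, a k :=
      Finset.sum_nonneg (fun k hk => h0 k (Finset.mem_insert_of_mem hk))
    have hj0 := h0 j (Finset.mem_insert_self j t)
    have hj1 := h1 j (Finset.mem_insert_self j t)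
    nlinarith [ih', hSnn, hj0, hj1]

lemma forward_zero (lam : ℕ → ℝ) (h0 : 0 ≤ lam 0) (hmono : StrictMono lam)
    (hdense : Dense (Submodule.span ℝ
        {F : C(Set.Icc (0:ℝ) 1, ℝ) |
          ∃ k : ℕ, ∀ x : Set.Icc (0:ℝ) 1, F x = (x : ℝ) ^ lam k} :
        Set C(Set.Icc (0:ℝ) 1, ℝ))) : lam 0 = 0 := by
  by_contra hne0
  have hl0 : 0 < lam 0 := lt_of_le_of_ne h0 (Ne.symm hne0)
  have hpos : ∀ k, 0 < lam k := fun k => lt_of_lt_of_le hl0 (hmono.monotone (Nat.zero_le k))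
  set pt : Set.Icc (0:ℝ) 1 := ⟨0, by constructor <;> norm_num⟩ with hpt
  have hzero : ∀ F ∈ Submodule.span ℝ
      {F : C(Set.Icc (0:ℝ) 1, ℝ) |
        ∃ k : ℕ, ∀ x : Set.Icc (0:ℝ) 1, F x = (x : ℝ) ^ lam k}, F pt = 0 := by
    intro F hF
    induction hF using Submodule.span_induction with
    | mem F hFmem =>
      obtain ⟨k, hk⟩ := hFmem
      rw [hk pt]
      exact Real.zero_rpow (hpos k).ne'
    | zero => rfl
    | add F G _ _ ihF ihG => simp [ihF, ihG]
    | smul a F _ ihF => simp [ihF]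
  have h1 : (1 : C(Set.Icc (0:ℝ) 1, ℝ)) ∈ closure (Submodule.span ℝ
      {F : C(Set.Icc (0:ℝ) 1, ℝ) |
        ∃ k : ℕ, ∀ x : Set.Icc (0:ℝ) 1, F x = (x : ℝ) ^ lam k} :
      Set C(Set.Icc (0:ℝ) 1, ℝ)) := hdense _
  obtain ⟨P, hP, hdist⟩ := Metric.mem_closure_iff.mp h1 1 one_pos
  have h2 : dist ((1 : C(Set.Icc (0:ℝ) 1, ℝ)) pt) (P pt) ≤ dist (1 : C(Set.Icc (0:ℝ) 1, ℝ)) P :=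
    ContinuousMap.dist_apply_le_dist pt
  rw [hzero P hP] at h2
  have h3 : ((1 : C(Set.Icc (0:ℝ) 1, ℝ)) : Set.Icc (0:ℝ) 1 → ℝ) pt = (1:ℝ) := rfl
  rw [h3, Real.dist_eq, sub_zero, abs_one] at h2
  linarith

lemma forward_div (lam : ℕ → ℝ) (h0 : 0 ≤ lam 0) (hmono : StrictMono lam)
    (htop : Filter.Tendsto lam Filter.atTop Filter.atTop)
    (hdense : Dense (Submodule.span ℝ
        {F : C(Set.Icc (0:ℝ) 1, ℝ) |
          ∃ k : ℕ, ∀ x : Set.Icc (0:ℝ) 1, F x = (x : ℝ) ^ lam k} :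
        Set C(Set.Icc (0:ℝ) 1, ℝ))) :
    Filter.Tendsto (fun n : ℕ => ∑ k ∈ Finset.Icc 1 n, 1 / lam k)
      Filter.atTop Filter.atTop := by
  by_contra hdiv
  have hpos : ∀ k, 0 ≤ lam k := fun k => h0.trans (hmono.monotone (Nat.zero_le k))
  set Sf : ℕ → ℝ := fun n => ∑ k ∈ Finset.Icc 1 n, 1 / lam k with hSf
  have hmonoS : Monotone Sf := by
    intro n n' hnn
    apply Finset.sum_le_sum_of_subset_of_nonneg
    · exact Finset.Icc_subset_Icc_right hnn
    · intro k _ _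
      exact one_div_nonneg.mpr (hpos k)
  rcases tendsto_of_monotone hmonoS with h | ⟨l, hl⟩
  · exact hdiv h
  have hSle : ∀ n, Sf n ≤ l := fun n => Monotone.ge_of_tendsto hmonoS hl n
  -- the exponent m
  set m : ℝ := (lam 0 + lam 1) / 2 with hmdef
  have h01 : lam 0 < lam 1 := hmono (Nat.lt_succ_self 0)
  have hm0 : lam 0 < m := by rw [hmdef]; linarith
  have hm1 : m < lam 1 := by rw [hmdef]; linarith
  have hm : 0 < m := lt_of_le_of_lt h0 hm0
  have hmne : ∀ k, lam k ≠ m := by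
    intro k
    rcases Nat.eq_zero_or_pos k with rfl | hk
    · exact hm0.ne
    · have : lam 1 ≤ lam k := hmono.monotone hk
      exact (lt_of_lt_of_le hm1 this).ne'
  -- the factors
  set q : ℕ → ℝ := fun k => (m - lam k) ^ 2 / (m + lam k + 1) ^ 2 with hq
  have hqden : ∀ k, (0:ℝ) < m + lam k + 1 := fun k => by have := hpos k; linarith
  have hq0 : ∀ k, 0 < q k := by
    intro k
    apply div_pos
    · have hne' : m - lam k ≠ 0 := sub_ne_zero.mpr (Ne.symm (hmne k))
      exact lt_of_le_of_ne (sq_nonneg _) (Ne.symm (pow_ne_zero 2 hne'))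
    · exact pow_pos (hqden k) 2
  have hq1 : ∀ k, q k ≤ 1 := by
    intro k
    rw [div_le_one (pow_pos (hqden k) 2)]
    have := hpos k
    nlinarith
  -- choose K
  obtain ⟨K₁, hK₁⟩ := Filter.eventually_atTop.mp
    (htop.eventually (Filter.eventually_ge_atTop (2 * m + 1)))
  have hεpos : (0:ℝ) < 1 / (2 * (2 * m + 1)) := by positivity
  obtain ⟨K₂, hK₂⟩ := Filter.eventually_atTop.mp
    ((hl.eventually (Metric.ball_mem_nhds l hεpos)))
  set K : ℕ := max (max K₁ (K₂ + 1)) 1 with hKdef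
  have hKK₁ : K₁ ≤ K := le_trans (le_max_left _ _) (le_max_left _ _)
  have hKK₂ : K₂ ≤ K - 1 := by omega
  have hK1 : 1 ≤ K := le_max_right _ _
  have hlam2m : ∀ k, K ≤ k → 2 * m + 1 ≤ lam k := fun k hk => hK₁ k (le_trans hKK₁ hk)
  have htailS : l - Sf (K - 1) ≤ 1 / (2 * (2 * m + 1)) := by
    have h' := Metric.mem_ball.mp (hK₂ (K - 1) hKK₂)
    rw [Real.dist_eq, abs_lt] at h'
    linarith [h'.1]
  -- tail sums over arbitrary finite sets
  have htails : ∀ u : Finset ℕ, (∀ k ∈ u, K ≤ k) → ∑ k ∈ u, 1 / lam k ≤ l - Sf (K - 1) := by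
    intro u hu
    have hSK : Sf (K - 1) ≤ l := hSle _
    rcases u.eq_empty_or_nonempty with rfl | hune
    · simp
      linarith
    set M : ℕ := u.sup id with hM
    have hKM : K ≤ M := by
      obtain ⟨k, hk⟩ := hune
      exact le_trans (hu k hk) (Finset.le_sup (f := id) hk)
    have husub : u ⊆ Finset.Icc K M := by
      intro k hk
      rw [Finset.mem_Icc]
      exact ⟨hu k hk, Finset.le_sup (f := id) hk⟩
    have h1 : ∑ k ∈ u, 1 / lam k ≤ ∑ k ∈ Finset.Icc K M, 1 / lam k :=
      Finset.sum_le_sum_of_subset_of_nonneg husub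
        (fun k _ _ => one_div_nonneg.mpr (hpos k))
    have h2 : ∑ k ∈ Finset.Icc K M, 1 / lam k = Sf M - Sf (K - 1) := by
      have hcons : (∑ k ∈ Finset.Ioc 0 (K-1), 1 / lam k) + ∑ k ∈ Finset.Ioc (K-1) M, 1 / lam k
          = ∑ k ∈ Finset.Ioc 0 M, 1 / lam k :=
        Finset.sum_Ioc_consecutive _ (Nat.zero_le _) (by omega)
      have e1 : Finset.Icc 1 M = Finset.Ioc 0 M := by rw [← Finset.Icc_add_one_left_eq_Ioc, zero_add]
      have e2 : Finset.Icc 1 (K-1) = Finset.Ioc 0 (K-1) := by rw [← Finset.Icc_add_one_left_eq_Ioc, zero_add]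
      have e3 : Finset.Icc K M = Finset.Ioc (K-1) M := by
        rw [← Finset.Icc_add_one_left_eq_Ioc, Nat.sub_add_cancel hK1]
      rw [e3, hSf]
      simp only
      rw [e1, e2, ← hcons]
      ring
    rw [h2] at h1
    linarith [hSle M]
  -- uniform lower bound for products
  set δ : ℝ := (1/4) * ∏ k ∈ Finset.range K, q k with hδdef
  have hδ : 0 < δ := by
    apply mul_pos (by norm_num)
    exact Finset.prod_pos (fun k _ => hq0 k)
  have hlower : ∀ u : Finset ℕ, δ ≤ ∏ k ∈ u, q k := by
    intro u
    have hsplit : (∏ k ∈ u ∩ Finset.range K, q k) * ∏ k ∈ u \ Finset.range K, q k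
        = ∏ k ∈ u, q k := Finset.prod_inter_mul_prod_diff u (Finset.range K) q
    -- first factor ≥ ∏ range K
    have h1 : ∏ k ∈ Finset.range K, q k ≤ ∏ k ∈ u ∩ Finset.range K, q k := by
      have hsub : u ∩ Finset.range K ⊆ Finset.range K := Finset.inter_subset_right
      have := Finset.prod_sdiff hsub (f := q)
      rw [← this]
      have hle1 : ∏ k ∈ Finset.range K \ (u ∩ Finset.range K), q k ≤ 1 :=
        Finset.prod_le_one (fun k _ => (hq0 k).le) (fun k _ => hq1 k)
      have hnn : 0 ≤ ∏ k ∈ u ∩ Finset.range K, q k :=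
        Finset.prod_nonneg (fun k _ => (hq0 k).le)
      nlinarith
    -- second factor ≥ 1/4
    have h2 : (1/4 : ℝ) ≤ ∏ k ∈ u \ Finset.range K, q k := by
      set w := u \ Finset.range K with hw
      have hwK : ∀ k ∈ w, K ≤ k := by
        intro k hk
        rw [hw, Finset.mem_sdiff, Finset.mem_range] at hk
        omega
      set a : ℕ → ℝ := fun k => (2 * m + 1) / lam k with ha
      have ha0 : ∀ k ∈ w, 0 ≤ a k := fun k hk => by
        have := hpos k; have := hlam2m k (hwK k hk); positivity
      have ha1 : ∀ k ∈ w, a k ≤ 1 := by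
        intro k hk
        have h2m := hlam2m k (hwK k hk)
        rw [ha]
        apply div_le_one_of_le₀ h2m (by linarith [hpos k])
      have hsum : ∑ k ∈ w, a k ≤ 1/2 := by
        have e1 : ∑ k ∈ w, a k = (2*m+1) * ∑ k ∈ w, 1 / lam k := by
          rw [Finset.mul_sum]
          apply Finset.sum_congr rfl
          intro k _
          rw [ha]
          ring
        have e2 := htails w hwK
        have h2m1 : (0:ℝ) < 2*m+1 := by linarith
        calc ∑ k ∈ w, a k = (2*m+1) * ∑ k ∈ w, 1 / lam k := e1
          _ ≤ (2*m+1) * (l - Sf (K-1)) := by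
              apply mul_le_mul_of_nonneg_left e2 h2m1.le
          _ ≤ (2*m+1) * (1 / (2 * (2*m+1))) := by
              apply mul_le_mul_of_nonneg_left htailS h2m1.le
          _ = 1/2 := by field_simp
      have hwp := wprod w a ha0 ha1
      have hhalf : (1/2 : ℝ) ≤ ∏ k ∈ w, (1 - a k) := by
        have : 1 - ∑ k ∈ w, a k ≥ 1/2 := by linarith
        linarith [hwp]
      have hterm : ∀ k ∈ w, (1 - a k)^2 ≤ q k := by
        intro k hk
        have hK2m := hlam2m k (hwK k hk)
        have hlpos : (0:ℝ) < lam k := by linarith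
        have hfr : 1 - a k ≤ (lam k - m) / (m + lam k + 1) := by
          have e : 1 - a k = (lam k - (2*m+1)) / lam k := by
            rw [ha]; field_simp
          rw [e, div_le_div_iff₀ hlpos (hqden k)]
          nlinarith
        have hfrnn : 0 ≤ 1 - a k := by
          have := ha1 k hk; linarith
        have hq' : q k = ((lam k - m) / (m + lam k + 1))^2 := by
          rw [hq, div_pow]
          congr 1
          ring
        rw [hq']
        apply pow_le_pow_left₀ hfrnn hfr
      calc (1/4 : ℝ) = (1/2)^2 := by norm_num
        _ ≤ (∏ k ∈ w, (1 - a k))^2 := by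
            apply pow_le_pow_left₀ (by norm_num) hhalf
        _ = ∏ k ∈ w, (1 - a k)^2 := by rw [Finset.prod_pow]
        _ ≤ ∏ k ∈ w, q k := by
            apply Finset.prod_le_prod
            · intro k _; positivity
            · exact hterm
    calc δ = (1/4) * ∏ k ∈ Finset.range K, q k := hδdef
      _ = (∏ k ∈ Finset.range K, q k) * (1/4) := by ring
      _ ≤ (∏ k ∈ u ∩ Finset.range K, q k) * ∏ k ∈ u \ Finset.range K, q k :=
          mul_le_mul h1 h2 (by norm_num)
            (Finset.prod_nonneg (fun k _ => (hq0 k).le))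
      _ = ∏ k ∈ u, q k := hsplit
  -- conclude using the dual lower bound
  set v : ℕ → C(Set.Icc (0:ℝ) 1, ℝ) := fun k => powCM (lam k) (hpos k) with hv
  have hSeq : {F : C(Set.Icc (0:ℝ) 1, ℝ) |
      ∃ k : ℕ, ∀ x : Set.Icc (0:ℝ) 1, F x = (x:ℝ) ^ lam k} = Set.range v := by
    ext F
    constructor
    · rintro ⟨k, hk⟩
      exact ⟨k, (ContinuousMap.ext hk).symm⟩
    · rintro ⟨k, rfl⟩
      exact ⟨k, fun x => rfl⟩
  set ε : ℝ := Real.sqrt (δ / (2*m+1)) with hε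
  have h2m1 : (0:ℝ) < 2*m+1 := by linarith
  have hεpos' : 0 < ε := Real.sqrt_pos.mpr (by positivity)
  have hFmem := hdense (powCM m hm.le)
  obtain ⟨P, hPmem, hdist⟩ := Metric.mem_closure_iff.mp hFmem ε hεpos'
  rw [hSeq] at hPmem
  obtain ⟨cf, hcf⟩ := Finsupp.mem_span_range_iff_exists_finsupp.mp hPmem
  set s := cf.support with hs
  have hPx : ∀ x : Set.Icc (0:ℝ) 1, P x = ∑ k ∈ s, cf k * (x:ℝ) ^ lam k := by
    intro x
    rw [← hcf, Finsupp.sum, ContinuousMap.sum_apply]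
    apply Finset.sum_congr rfl
    intro k _
    rfl
  set d := dist (powCM m hm.le) P with hdd
  have hd0 : 0 ≤ d := dist_nonneg
  have hdb : ∀ x ∈ Set.Icc (0:ℝ) 1, |x ^ m - ∑ k ∈ s, cf k * x ^ lam k| ≤ d := by
    intro x hx
    have h := ContinuousMap.dist_apply_le_dist (f := powCM m hm.le) (g := P) ⟨x, hx⟩
    rw [Real.dist_eq] at h
    have h1 : powCM m hm.le ⟨x, hx⟩ = (x:ℝ) ^ m := rfl
    rw [h1, hPx ⟨x,hx⟩] at h
    exact h
  have hdual := dual lam m hm s (fun k _ => hpos k) (hmono.injective.injOn)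
    (fun k _ => hmne k) cf d hd0 hdb
  have hlow := hlower s
  have hd2 : d^2 < ε^2 := by
    have := pow_lt_pow_left₀ hdist hd0 (n := 2)
    apply this
    norm_num
  have hε2 : ε^2 = δ/(2*m+1) := Real.sq_sqrt (by positivity)
  have hstep : δ/(2*m+1) ≤ (∏ k ∈ s, ((m - lam k)^2/(m + lam k + 1)^2))/(2*m+1) := by
    exact (div_le_div_iff_of_pos_right h2m1).mpr hlow
  linarith

end MuntzAux

/-- Müntz's theorem: for 0 ≤ λ₀ < λ₁ < ⋯ → ∞, the span of the powers x ^ λₖ is dense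
in C[0,1] iff λ₀ = 0 and Σ_{k≥1} 1/λₖ = ∞. -/
theorem muntz (lam : ℕ → ℝ) (h0 : 0 ≤ lam 0) (hmono : StrictMono lam)
    (htop : Filter.Tendsto lam Filter.atTop Filter.atTop) :
    Dense (Submodule.span ℝ
        {F : C(Set.Icc (0:ℝ) 1, ℝ) |
          ∃ k : ℕ, ∀ x : Set.Icc (0:ℝ) 1, F x = (x : ℝ) ^ lam k} :
        Set C(Set.Icc (0:ℝ) 1, ℝ)) ↔
      (lam 0 = 0 ∧
        Filter.Tendsto (fun n : ℕ => ∑ k ∈ Finset.Icc 1 n, 1 / lam k)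
          Filter.atTop Filter.atTop) := by
  constructor
  · intro hdense
    exact ⟨MuntzAux.forward_zero lam h0 hmono hdense,
      MuntzAux.forward_div lam h0 hmono htop hdense⟩
  · rintro ⟨hz, hdiv⟩
    exact MuntzAux.backward lam hmono htop hz hdiv
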